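/- For positive constants c1, c2, c3, c4 with c3 > 2, c4 > 3·c1, and c2·c4²/c3² ≥ e: c1·ln(9·c2·c4²·[ln(c2·c4²/c3²)]²/c3²) + 2·c1 < 3·c4·ln(c2·c4²/c3²). -/

import Mathlib

theorem stmt_18 (c1 c2 c3 c4 : ℝ) (h1 : 0 < c1) (h2 : 0 < c2)
    (h3 : 2 < c3) (h4 : 3 * c1 < c4)
    (he : Real.exp 1 ≤ c2 * c4 ^ 2 / c3 ^ 2) :
    c1 * Real.log (9 * c2 * c4 ^ 2 * (Real.log (c2 * c4 ^ 2 / c3 ^ 2)) ^ 2 / c3 ^ 2) + 2 * c1 <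
      3 * c4 * Real.log (c2 * c4 ^ 2 / c3 ^ 2) := by
  set x := c2 * c4 ^ 2 / c3 ^ 2 with hx
  have hxpos : 0 < x := lt_of_lt_of_le (Real.exp_pos 1) he
  set L := Real.log x with hL
  have hL1 : 1 ≤ L := by
    rw [hL, Real.le_log_iff_exp_le hxpos]; exact he
  have hLpos : 0 < L := lt_of_lt_of_le one_pos hL1
  have hc3 : (0:ℝ) < c3 := by linarith
  have hrw : 9 * c2 * c4 ^ 2 * L ^ 2 / c3 ^ 2 = x * (9 * L ^ 2) := by
    field_simp [hx]; rw [hx, mul_div_assoc']; exact (mul_div_cancel_left₀ _ (pow_pos hc3 2).ne').symm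
  have hlog : Real.log (x * (9 * L ^ 2)) = L + (Real.log 9 + 2 * Real.log L) := by
    rw [Real.log_mul (ne_of_gt hxpos) (by positivity),
        Real.log_mul (by norm_num) (by positivity), Real.log_pow]
    push_cast; ring
  have hlog9 : Real.log 9 ≤ 4 := by
    have : (9:ℝ) = 3 ^ 2 := by norm_num
    rw [this, Real.log_pow]
    have := Real.log_le_sub_one_of_pos (show (0:ℝ) < 3 by norm_num)
    push_cast; linarith
  have hlogL : Real.log L ≤ L - 1 := Real.log_le_sub_one_of_pos hLpos
  rw [hrw, hlog]
  have hbound : L + (Real.log 9 + 2 * Real.log L) + 2 ≤ 9 * L := by nlinarith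
  have h9 : c1 * (9 * L) < 3 * c4 * L := by nlinarith
  nlinarith [mul_le_mul_of_nonneg_left hbound h1.le]
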